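/- Let R be a commutative ring, n ≥ 2 an even integer, and f, g ∈ R[x] of degree < n. For k = n/2 − 1, the k-th coefficient of the product of f and g in R[x]/(x^n − x^{n/2} + 1) is h_{n/2−1} = a_{n/2−1} − a_{3n/2−1}. -/

import Mathlib

open Polynomial

/-- `a_d = Σ_{i+j=d, 0 ≤ i,j ≤ n−1} f_i g_j`. -/
def convCoeff {R : Type*} [CommRing R] (n : ℕ) (f g : Polynomial R) (d : ℕ) : R :=
  ∑ i ∈ Finset.range n, ∑ j ∈ Finset.range n,
    if i + j = d then f.coeff i * g.coeff j else 0

lemma convCoeff_eq {R : Type*} [CommRing R] (n : ℕ) (f g : Polynomial R)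
    (hf : f.degree < n) (hg : g.degree < n) (d : ℕ) :
    convCoeff n f g d = (f * g).coeff d := by
  have hf' : ∀ i, n ≤ i → f.coeff i = 0 := fun i hi =>
    coeff_eq_zero_of_degree_lt (lt_of_lt_of_le hf (by exact_mod_cast hi))
  have hg' : ∀ j, n ≤ j → g.coeff j = 0 := fun j hj =>
    coeff_eq_zero_of_degree_lt (lt_of_lt_of_le hg (by exact_mod_cast hj))
  rw [coeff_mul]
  rw [convCoeff, ← Finset.sum_product', ← Finset.sum_filter]
  rw [← Finset.sum_filter_add_sum_filter_not (Finset.HasAntidiagonal.antidiagonal d)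
    (fun x => x.1 < n ∧ x.2 < n)]
  have h1 : (Finset.filter (fun x : ℕ × ℕ => x.1 + x.2 = d)
      (Finset.range n ×ˢ Finset.range n))
      = Finset.filter (fun x => x.1 < n ∧ x.2 < n) (Finset.HasAntidiagonal.antidiagonal d) := by
    ext x
    simp only [Finset.mem_filter, Finset.mem_product, Finset.mem_range,
      Finset.HasAntidiagonal.mem_antidiagonal]
    tauto
  have h2 : ∑ x ∈ Finset.filter (fun x : ℕ × ℕ => ¬(x.1 < n ∧ x.2 < n))
      (Finset.HasAntidiagonal.antidiagonal d), f.coeff x.1 * g.coeff x.2 = 0 := by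
    apply Finset.sum_eq_zero
    intro x hx
    simp only [Finset.mem_filter, not_and_or, not_lt] at hx
    rcases hx.2 with h | h
    · rw [hf' _ h, zero_mul]
    · rw [hg' _ h, mul_zero]
  rw [h1, h2, add_zero]

/-- For `k = n/2 − 1`, the `k`-th coefficient of the product of `f` and `g` in
`R[x]/(xⁿ − x^{n/2} + 1)` is `h_{n/2−1} = a_{n/2−1} − a_{3n/2−1}`. -/
theorem coeff_mul_mod_mid {R : Type*} [CommRing R] (n : ℕ) (hn : 2 ≤ n) (hne : Even n)
    (f g : Polynomial R) (hf : f.degree < n) (hg : g.degree < n) :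
    ((f * g) %ₘ ((X : Polynomial R) ^ n - X ^ (n / 2) + 1)).coeff (n / 2 - 1)
      = convCoeff n f g (n / 2 - 1) - convCoeff n f g (n + n / 2 - 1) := by
  rcases subsingleton_or_nontrivial R with hR | hR
  · exact Subsingleton.elim _ _
  set m := n / 2 with hm
  have hmn : 2 * m = n := Nat.two_mul_div_two_of_even hne
  have hm1 : 1 ≤ m := by omega
  have hmltn : m < n := by omega
  set P : Polynomial R := X ^ n - X ^ m + 1 with hP
  have hPeq : P = X ^ n - (X ^ m - 1) := by ring
  have hdlt : ((X : Polynomial R) ^ m - 1).degree < (n : ℕ) := by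
    apply lt_of_le_of_lt (degree_sub_le _ _)
    rw [degree_X_pow, degree_one, max_lt_iff]
    exact ⟨by exact_mod_cast hmltn, by exact_mod_cast (by omega : (0:ℕ) < n)⟩
  have hPm : P.Monic := by
    rw [hPeq]; exact monic_X_pow_sub hdlt
  have hPdeg : P.degree = n := by
    rw [hPeq, degree_sub_eq_left_of_degree_lt (by rwa [degree_X_pow]), degree_X_pow]
  set c : Polynomial R := f * g with hc
  set q : Polynomial R := c /ₘ P with hq
  set h : Polynomial R := c %ₘ P with hh
  have hkey : h + P * q = c := modByMonic_add_div c P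
  -- degree bounds
  have hfn : f.natDegree ≤ n - 1 := by
    rcases eq_or_ne f 0 with rfl | h0
    · simp
    · have := (natDegree_lt_iff_degree_lt h0).mpr hf
      omega
  have hgn : g.natDegree ≤ n - 1 := by
    rcases eq_or_ne g 0 with rfl | h0
    · simp
    · have := (natDegree_lt_iff_degree_lt h0).mpr hg
      omega
  have hqd : ∀ e, n - 1 ≤ e → q.coeff e = 0 := by
    intro e he
    apply coeff_eq_zero_of_natDegree_lt
    rw [hq, natDegree_divByMonic c hPm]
    have hcd : c.natDegree ≤ 2 * n - 2 := by
      refine le_trans natDegree_mul_le ?_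
      omega
    have hPn : P.natDegree = n := natDegree_eq_of_degree_eq_some hPdeg
    omega
  have hhd : ∀ e, n ≤ e → h.coeff e = 0 := by
    intro e he
    apply coeff_eq_zero_of_degree_lt
    refine lt_of_lt_of_le (hPdeg ▸ degree_modByMonic_lt c hPm) ?_
    exact_mod_cast he
  -- coefficient of P * q at any degree
  have hPq : ∀ d, (P * q).coeff d
      = (if n ≤ d then q.coeff (d - n) else 0)
        - (if m ≤ d then q.coeff (d - m) else 0) + q.coeff d := by
    intro d
    have : P * q = q * X ^ n - q * X ^ m + q := by rw [hP]; ring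
    rw [this, coeff_add, coeff_sub, coeff_mul_X_pow', coeff_mul_X_pow']
  -- the two coefficient equations
  have e1 : c.coeff (m - 1) = q.coeff (m - 1) + h.coeff (m - 1) := by
    have := congrArg (fun p => Polynomial.coeff p (m - 1)) hkey
    simp only [coeff_add] at this
    rw [hPq (m - 1)] at this
    rw [if_neg (by omega), if_neg (by omega)] at this
    rw [← this]; ring
  have e2 : c.coeff (n + m - 1) = q.coeff (m - 1) := by
    have := congrArg (fun p => Polynomial.coeff p (n + m - 1)) hkey
    simp only [coeff_add] at this
    rw [hPq (n + m - 1)] at this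
    rw [if_pos (by omega), if_pos (by omega)] at this
    rw [hhd (n + m - 1) (by omega), hqd (n + m - 1 - m) (by omega),
      hqd (n + m - 1) (by omega)] at this
    rw [← this, show n + m - 1 - n = m - 1 from by omega]
    ring
  rw [convCoeff_eq n f g hf hg, convCoeff_eq n f g hf hg, ← hc]
  have : h.coeff (m - 1) = c.coeff (m - 1) - c.coeff (n + m - 1) := by
    rw [e1, e2]; ring
  exact this
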